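/- Let L = h²∂² + 2u with u ∈ R and let M ∈ Ψ(R) be arbitrary. In Ψ(R)[ε] set L̃ := L − ε [L, M]₊ and L_G := L + ε [L, M]₋. Then L̃ and L_G each admit a unique square root whose ε⁰-part is L^{1/2}; these square roots are related by L_G^{1/2} = L̃^{1/2} + ε [ L^{1/2}, M ], and for every n ≥ 0 (taking (2n+1)-st powers of these square roots) one has L_G^{n+1/2} = L̃^{n+1/2} + ε [ L^{n+1/2}, M ]; in particular ( L_G^{n+1/2} )₋ = ( L̃^{n+1/2} + ε [ L^{n+1/2}, M ] )₋. -/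

import Mathlib

open scoped BigOperators

/-- Generalized binomial coefficient `C(k,l) = k(k-1)⋯(k-l+1)/l!` for `k : ℤ`. -/
def gbinom (k : ℤ) (l : ℕ) : ℚ :=
  (∏ i ∈ Finset.range l, ((k : ℚ) - i)) / (Nat.factorial l)

/-- Pseudo-differential operators (and symbols): coefficient functions `ℤ → R`
with support bounded above.  The parameter `d` (the derivation) determines the product. -/
structure PDO (R : Type) [CommRing R] [Algebra ℚ R] (d : R →+ R) where
  coeff : ℤ → R
  bdd : ∃ N : ℤ, ∀ n : ℤ, N < n → coeff n = 0

namespace PDO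

variable {R : Type} [CommRing R] [Algebra ℚ R] {d : R →+ R}

theorem ext' {A B : PDO R d} (h : A.coeff = B.coeff) : A = B := by
  cases A; cases B; cases h; rfl

set_option linter.unusedSectionVars false in
theorem iterD_zero (d : R →+ R) (j : ℕ) : d^[j] (0 : R) = 0 := by
  induction j with
  | zero => rfl
  | succ j ih => rw [Function.iterate_succ_apply', ih, map_zero]

instance : Zero (PDO R d) := ⟨⟨fun _ => 0, ⟨0, fun _ _ => rfl⟩⟩⟩

instance : One (PDO R d) :=
  ⟨⟨fun n => if n = 0 then 1 else 0, ⟨0, fun n hn => if_neg (by omega)⟩⟩⟩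

instance : Add (PDO R d) :=
  ⟨fun A B => ⟨fun n => A.coeff n + B.coeff n, by
    obtain ⟨N, hN⟩ := A.bdd
    obtain ⟨M, hM⟩ := B.bdd
    exact ⟨max N M, fun n hn => by
      show A.coeff n + B.coeff n = 0
      rw [hN n (lt_of_le_of_lt (le_max_left N M) hn),
        hM n (lt_of_le_of_lt (le_max_right N M) hn), add_zero]⟩⟩⟩

instance : Neg (PDO R d) :=
  ⟨fun A => ⟨fun n => -A.coeff n, by
    obtain ⟨N, hN⟩ := A.bdd
    exact ⟨N, fun n hn => by show -A.coeff n = 0; rw [hN n hn, neg_zero]⟩⟩⟩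

instance : SMul ℚ (PDO R d) :=
  ⟨fun c A => ⟨fun n => c • A.coeff n, by
    obtain ⟨N, hN⟩ := A.bdd
    exact ⟨N, fun n hn => by show c • A.coeff n = 0; rw [hN n hn, smul_zero]⟩⟩⟩

instance : AddCommGroup (PDO R d) where
  add := (· + ·)
  zero := 0
  neg := Neg.neg
  add_assoc A B C := ext' (funext fun n => add_assoc (A.coeff n) (B.coeff n) (C.coeff n))
  zero_add A := ext' (funext fun n => zero_add (A.coeff n))
  add_zero A := ext' (funext fun n => add_zero (A.coeff n))
  add_comm A B := ext' (funext fun n => add_comm (A.coeff n) (B.coeff n))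
  neg_add_cancel A := ext' (funext fun n => neg_add_cancel (A.coeff n))
  nsmul := nsmulRec
  zsmul := zsmulRec

/-- The product of pseudo-differential operators, determined by the commutation rule
`∂^k · f = Σ_{l ≥ 0} C(k,l) (∂^l f) ∂^(k-l)`. -/
noncomputable instance : Mul (PDO R d) :=
  ⟨fun A B =>
    ⟨fun n => ∑ᶠ (k : ℤ) (m : ℤ),
        if _ : 0 ≤ k + m - n then
          A.coeff k * (gbinom k (k + m - n).toNat • (d^[(k + m - n).toNat] (B.coeff m)))
        else 0, by
      obtain ⟨N, hN⟩ := A.bdd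
      obtain ⟨M, hM⟩ := B.bdd
      refine ⟨N + M, fun n hn => ?_⟩
      have hz : ∀ k m : ℤ,
          (if _ : 0 ≤ k + m - n then
            A.coeff k * (gbinom k (k + m - n).toNat • (d^[(k + m - n).toNat] (B.coeff m)))
          else 0) = 0 := by
        intro k m
        by_cases hl : 0 ≤ k + m - n
        · rw [dif_pos hl]
          by_cases hk : N < k
          · rw [hN k hk, zero_mul]
          · rw [hM m (by omega), iterD_zero, smul_zero, mul_zero]
        · rw [dif_neg hl]
      simp only [hz, finsum_zero]⟩⟩

noncomputable def npow (A : PDO R d) : ℕ → PDO R d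
  | 0 => 1
  | n + 1 => npow A n * A

noncomputable instance : Pow (PDO R d) ℕ := ⟨fun A n => A.npow n⟩

/-- The monomial `r ∂^k`. -/
def mono (r : R) (k : ℤ) : PDO R d :=
  ⟨fun n => if n = k then r else 0, ⟨k, fun n hn => if_neg (by omega)⟩⟩

/-- The constant (order-zero) operator `r`. -/
def const (r : R) : PDO R d := mono r 0

/-- The operator `∂`. -/
def del : PDO R d := mono (1 : R) 1

/-- The operator `h∂`. -/
def hdel (h : Rˣ) : PDO R d := mono (h : R) 1

/-- The Lax operator `L = h²∂² + 2u`. -/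
def Lop (h : Rˣ) (u : R) : PDO R d :=
  ⟨fun n => if n = 2 then (h : R) ^ 2 else if n = 0 then 2 * u else 0,
   ⟨2, fun n hn => by
      show (if n = 2 then (h : R) ^ 2 else if n = 0 then 2 * u else 0) = 0
      rw [if_neg (by omega), if_neg (by omega)]⟩⟩

/-- The differential part `A₊`. -/
def pos (A : PDO R d) : PDO R d :=
  ⟨fun n => if 0 ≤ n then A.coeff n else 0, by
    obtain ⟨N, hN⟩ := A.bdd
    refine ⟨N, fun n hn => ?_⟩
    show (if 0 ≤ n then A.coeff n else 0) = 0
    by_cases h0 : (0 : ℤ) ≤ n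
    · rw [if_pos h0]; exact hN n hn
    · rw [if_neg h0]⟩

/-- The integral part `A₋ = A − A₊`. -/
def negp (A : PDO R d) : PDO R d :=
  ⟨fun n => if n < 0 then A.coeff n else 0, ⟨0, fun n hn => if_neg (by omega)⟩⟩

/-- The residue `Res_∂ A = a₋₁`. -/
def res (A : PDO R d) : R := A.coeff (-1)

/-- The formal adjoint, determined by `(f ∂^k)* = (−∂)^k · f`. -/
noncomputable def adj (A : PDO R d) : PDO R d :=
  ⟨fun n => ∑ᶠ k : ℤ,
      if _ : 0 ≤ k - n then
        (((-1 : ℚ) ^ k) * gbinom k (k - n).toNat) • (d^[(k - n).toNat] (A.coeff k))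
      else 0, by
    obtain ⟨N, hN⟩ := A.bdd
    refine ⟨N, fun n hn => ?_⟩
    have hz : ∀ k : ℤ, (if _ : 0 ≤ k - n then
        (((-1 : ℚ) ^ k) * gbinom k (k - n).toNat) • (d^[(k - n).toNat] (A.coeff k))
      else 0) = 0 := by
      intro k
      by_cases hl : 0 ≤ k - n
      · rw [dif_pos hl, hN k (by omega), iterD_zero, smul_zero]
      · rw [dif_neg hl]
    simp only [hz, finsum_zero]⟩

/-- The operator `P(h∂) = Σ pₙ hⁿ ∂ⁿ` associated to the symbol `P(λ) = Σ pₙ λⁿ`. -/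
noncomputable def ofSymbol (h : Rˣ) (A : PDO R d) : PDO R d :=
  ⟨fun n => A.coeff n * ((h ^ n : Rˣ) : R), by
    obtain ⟨N, hN⟩ := A.bdd
    exact ⟨N, fun n hn => by show A.coeff n * ((h ^ n : Rˣ) : R) = 0; rw [hN n hn, zero_mul]⟩⟩

/-- Apply `d^[i]` to each coefficient. -/
def mapD (i : ℕ) (A : PDO R d) : PDO R d :=
  ⟨fun n => d^[i] (A.coeff n), by
    obtain ⟨N, hN⟩ := A.bdd
    exact ⟨N, fun n hn => by show d^[i] (A.coeff n) = 0; rw [hN n hn, iterD_zero]⟩⟩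

/-- The coefficientwise extension of an additive map `D : R →+ R`. -/
def mapHom (D : R →+ R) (A : PDO R d) : PDO R d :=
  ⟨fun n => D (A.coeff n), by
    obtain ⟨N, hN⟩ := A.bdd
    exact ⟨N, fun n hn => by show D (A.coeff n) = 0; rw [hN n hn, map_zero]⟩⟩

/-- The commutator `[A, B] = AB − BA`. -/
noncomputable def comm (A B : PDO R d) : PDO R d := A * B - B * A

end PDO

/-- The Leibniz rule: `d` is a derivation. -/
def Leibniz {R : Type} [CommRing R] [Algebra ℚ R] (d : R →+ R) : Prop :=
  ∀ a b : R, d (a * b) = a * d b + b * d a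

/-- `aₙ = 1/(2n+1)!!`. -/
def kdvA (n : ℕ) : ℚ := 1 / (Nat.doubleFactorial (2 * n + 1))

/-- `bₙ = (2n−1)!!` (with `b₀ = (−1)!! = 1`). -/
def kdvB (n : ℕ) : ℚ := (Nat.doubleFactorial (2 * n - 1) : ℕ)

/-- Pseudo-differential operators with coefficients in the dual numbers
`R[ε]/(ε²)`: `⟨A, B⟩` represents `A + εB`. -/
structure EPDO (R : Type) [CommRing R] [Algebra ℚ R] (d : R →+ R) where
  re : PDO R d
  im : PDO R d

namespace EPDO

variable {R : Type} [CommRing R] [Algebra ℚ R] {d : R →+ R}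

instance : Add (EPDO R d) := ⟨fun A B => ⟨A.re + B.re, A.im + B.im⟩⟩
instance : Neg (EPDO R d) := ⟨fun A => ⟨-A.re, -A.im⟩⟩
instance : Sub (EPDO R d) := ⟨fun A B => ⟨A.re - B.re, A.im - B.im⟩⟩
instance : Zero (EPDO R d) := ⟨⟨0, 0⟩⟩
instance : One (EPDO R d) := ⟨⟨1, 0⟩⟩

/-- Multiplication in the dual numbers: `(A + εB)(C + εD) = AC + ε(AD + BC)`. -/
noncomputable instance : Mul (EPDO R d) :=
  ⟨fun A B => ⟨A.re * B.re, A.re * B.im + A.im * B.re⟩⟩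

instance : SMul ℚ (EPDO R d) := ⟨fun c A => ⟨c • A.re, c • A.im⟩⟩

noncomputable def epow (A : EPDO R d) : ℕ → EPDO R d
  | 0 => 1
  | n + 1 => epow A n * A

noncomputable instance : Pow (EPDO R d) ℕ := ⟨fun A n => A.epow n⟩

/-- The inclusion `Ψ(R) → Ψ(R)[ε]`. -/
def lift (A : PDO R d) : EPDO R d := ⟨A, 0⟩

/-- The square-zero formal parameter `ε`. -/
def eps : EPDO R d := ⟨0, 1⟩

/-- The adjoint, extended `ε`-linearly. -/
noncomputable def eadj (A : EPDO R d) : EPDO R d := ⟨PDO.adj A.re, PDO.adj A.im⟩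

/-- The differential part, extended `ε`-linearly. -/
def epos (A : EPDO R d) : EPDO R d := ⟨PDO.pos A.re, PDO.pos A.im⟩

/-- The integral part, extended `ε`-linearly. -/
def enegp (A : EPDO R d) : EPDO R d := ⟨PDO.negp A.re, PDO.negp A.im⟩

/-- The commutator in `Ψ(R)[ε]`. -/
noncomputable def ecomm (A B : EPDO R d) : EPDO R d := A * B - B * A

/-- The residue, with values in the dual numbers `R[ε]` (as a pair). -/
def eres (A : EPDO R d) : R × R := (PDO.res A.re, PDO.res A.im)

end EPDO

/-! ### Auxiliary lemmas: generalized binomial coefficients -/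

section GbinomAux

lemma descPochhammer_smeval_rat (r : ℚ) (l : ℕ) :
    (descPochhammer ℤ l).smeval r = ∏ i ∈ Finset.range l, (r - i) := by
  induction l with
  | zero => simp [descPochhammer_zero, Polynomial.smeval_one]
  | succ l ih =>
      rw [descPochhammer_succ_right, Polynomial.smeval_mul, ih, Finset.prod_range_succ]
      congr 1
      simp [Polynomial.smeval_sub, Polynomial.smeval_X, Polynomial.smeval_natCast]

lemma gbinom_eq_choose (k : ℤ) (l : ℕ) : gbinom k l = Ring.choose (k : ℚ) l := by
  have h := Ring.descPochhammer_eq_factorial_smul_choose (R := ℚ) (k : ℚ) l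
  rw [descPochhammer_smeval_rat] at h
  rw [gbinom, h, nsmul_eq_mul]
  field_simp

@[simp] lemma gbinom_zero (k : ℤ) : gbinom k 0 = 1 := by simp [gbinom]

lemma gbinom_zero_left {l : ℕ} (hl : l ≠ 0) : gbinom 0 l = 0 := by
  rw [gbinom]
  rw [Finset.prod_eq_zero (Finset.mem_range.2 (Nat.pos_of_ne_zero hl)) (by simp)]
  simp

lemma gbinom_split (k : ℤ) (a c : ℕ) :
    gbinom k (a + c) * ((a+c).choose a : ℚ) = gbinom k a * gbinom (k - a) c := by
  have h := Ring.choose_smul_choose (k : ℚ) (n := a + c) (k := a) (Nat.le_add_right a c)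
  rw [nsmul_eq_mul] at h
  rw [gbinom_eq_choose, gbinom_eq_choose, gbinom_eq_choose, mul_comm, h,
    Nat.add_sub_cancel_left]
  norm_num

lemma gbinom_vandermonde (x y : ℤ) (b : ℕ) :
    gbinom (x + y) b = ∑ j ∈ Finset.range (b+1), gbinom x (b - j) * gbinom y j := by
  have h := Ring.add_choose_eq (R := ℚ) (r := (y:ℚ)) (s := (x:ℚ)) b (Commute.all _ _)
  rw [Finset.Nat.sum_antidiagonal_eq_sum_range_succ_mk] at h
  simp only [gbinom_eq_choose]
  push_cast
  rw [add_comm (x:ℚ), h]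
  exact Finset.sum_congr rfl fun j _ => mul_comm _ _

lemma gbinom_assoc_key (k p : ℤ) (a b : ℕ) {Λ : ℕ} (hΛ : b < Λ) :
    ∑ j ∈ Finset.range Λ,
      (if j ≤ b then gbinom k (a + b - j) * (((a + b - j).choose a : ℕ) : ℚ) * gbinom p j else 0)
      = gbinom k a * gbinom (k + p - a) b := by
  rw [← Finset.sum_subset (Finset.range_subset_range.2 hΛ)
    (fun j _ hj => if_neg (by simp at hj ⊢; omega))]
  have : ∀ j ∈ Finset.range (b+1),
      (if j ≤ b then gbinom k (a + b - j) * (((a + b - j).choose a : ℕ) : ℚ) * gbinom p j else 0)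
      = gbinom k a * (gbinom (k - a) (b - j) * gbinom p j) := by
    intro j hj
    rw [Finset.mem_range] at hj
    rw [if_pos (by omega)]
    have h1 : a + b - j = a + (b - j) := by omega
    rw [h1, mul_comm (gbinom k (a + (b-j))), ← mul_assoc, mul_comm _ (gbinom k (a + (b-j))),
      gbinom_split k a (b - j), mul_assoc]
  rw [Finset.sum_congr rfl this, ← Finset.mul_sum]
  congr 1
  have : k + p - a = (k - a) + p := by ring
  rw [this, gbinom_vandermonde]

end GbinomAux

/-! ### Auxiliary lemmas: iterated derivations -/

section IterD

variable {R : Type} [CommRing R] [Algebra ℚ R] {d : R →+ R}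

lemma iterD_add (d : R →+ R) (j : ℕ) (x y : R) :
    d^[j] (x + y) = d^[j] x + d^[j] y := by
  induction j with
  | zero => rfl
  | succ j ih => rw [Function.iterate_succ_apply', Function.iterate_succ_apply',
      Function.iterate_succ_apply', ih, map_add]

lemma iterD_qsmul (d : R →+ R) (j : ℕ) (c : ℚ) (x : R) :
    d^[j] (c • x) = c • d^[j] x := by
  induction j with
  | zero => rfl
  | succ j ih => rw [Function.iterate_succ_apply', Function.iterate_succ_apply', ih,
      map_rat_smul]

lemma iterD_neg (d : R →+ R) (j : ℕ) (x : R) : d^[j] (-x) = -d^[j] x := by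
  induction j with
  | zero => rfl
  | succ j ih => rw [Function.iterate_succ_apply', Function.iterate_succ_apply', ih, map_neg]

lemma iterD_sum (d : R →+ R) (j : ℕ) {ι : Type*} (s : Finset ι) (f : ι → R) :
    d^[j] (∑ i ∈ s, f i) = ∑ i ∈ s, d^[j] (f i) :=
  map_sum (AddMonoidHom.mk' (d^[j]) (iterD_add d j)) f s

lemma iterD_leibniz (hd : Leibniz d) (l : ℕ) (x y : R) :
    d^[l] (x * y) = ∑ a ∈ Finset.range (l+1), l.choose a • (d^[a] x * d^[l-a] y) := by
  induction l with
  | zero => simp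
  | succ l ih =>
      rw [Function.iterate_succ_apply', ih, map_sum]
      have hterm : ∀ a, d (l.choose a • (d^[a] x * d^[l-a] y)) =
          l.choose a • (d^[a] x * d^[l-a+1] y) + l.choose a • (d^[a+1] x * d^[l-a] y) := by
        intro a
        rw [map_nsmul, hd, smul_add]
        congr 2
        · rw [Function.iterate_succ_apply']
        · rw [mul_comm, Function.iterate_succ_apply']
      simp only [hterm, Finset.sum_add_distrib]
      rw [Finset.sum_range_succ' (fun a => (l+1).choose a • (d^[a] x * d^[l+1-a] y)) (l+1)]
      have h2 : ∀ a ∈ Finset.range (l+1),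
          (l+1).choose (a+1) • (d^[a+1] x * d^[l+1-(a+1)] y)
          = l.choose a • (d^[a+1] x * d^[l-a] y) + l.choose (a+1) • (d^[a+1] x * d^[l-a] y) := by
        intro a _
        have he : l + 1 - (a+1) = l - a := by omega
        rw [he, Nat.choose_succ_succ, add_smul]
      rw [Finset.sum_congr rfl h2, Finset.sum_add_distrib]
      have h3 : (∑ a ∈ Finset.range (l+1), l.choose (a+1) • (d^[a+1] x * d^[l-a] y))
          + (l+1).choose 0 • (d^[0] x * d^[l+1-0] y)
          = ∑ a ∈ Finset.range (l+1), l.choose a • (d^[a] x * d^[l-a+1] y) := by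
        rw [Finset.sum_range_succ' (fun a => l.choose a • (d^[a] x * d^[l-a+1] y)) l]
        rw [Finset.sum_range_succ (fun a => l.choose (a+1) • (d^[a+1] x * d^[l-a] y)) l,
          Nat.choose_succ_self, zero_smul, add_zero]
        congr 1
        · apply Finset.sum_congr rfl
          intro a ha
          rw [Finset.mem_range] at ha
          have he : l - (a+1) + 1 = l - a := by omega
          rw [he]
        · simp
      rw [← h3]
      abel

lemma iterD_leibniz_pad (hd : Leibniz d) {l Λ : ℕ} (hΛ : l < Λ) (x y : R) :
    d^[l] (x * y) = ∑ a ∈ Finset.range Λ, l.choose a • (d^[a] x * d^[l-a] y) := by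
  rw [iterD_leibniz hd]
  apply Finset.sum_subset (Finset.range_subset_range.2 hΛ)
  intro a _ ha
  rw [Finset.mem_range, not_lt] at ha
  rw [Nat.choose_eq_zero_of_lt (by omega), zero_smul]

end IterD

/-! ### PDO multiplication: Finset-sum representation and ring lemmas -/

namespace PDO

variable {R : Type} [CommRing R] [Algebra ℚ R] {d : R →+ R}

set_option linter.unusedSectionVars false

/-- The general term of the product. -/
noncomputable def mterm (A B : PDO R d) (n k : ℤ) (l : ℕ) : R :=
  A.coeff k * (gbinom k l • d^[l] (B.coeff (n - k + l)))

lemma mterm_coeff_left {A B : PDO R d} {n k : ℤ} {l : ℕ} (h : mterm A B n k l ≠ 0) :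
    A.coeff k ≠ 0 := fun h0 => h (by rw [mterm, h0, zero_mul])

lemma mterm_coeff_right {A B : PDO R d} {n k : ℤ} {l : ℕ} (h : mterm A B n k l ≠ 0) :
    B.coeff (n - k + l) ≠ 0 := fun h0 => h (by
  rw [mterm, h0, iterD_zero, smul_zero, mul_zero])

lemma mul_coeff (A B : PDO R d) (n : ℤ) {K : Finset ℤ} {L : Finset ℕ}
    (hKL : ∀ k l, mterm A B n k l ≠ 0 → k ∈ K ∧ l ∈ L) :
    (A * B).coeff n = ∑ k ∈ K, ∑ l ∈ L, mterm A B n k l := by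
  have hdef : (A * B).coeff n = ∑ᶠ (k : ℤ) (m : ℤ),
      if _ : 0 ≤ k + m - n then
        A.coeff k * (gbinom k (k + m - n).toNat • (d^[(k + m - n).toNat] (B.coeff m)))
      else 0 := rfl
  rw [hdef]
  have hF : ∀ k m : ℤ, (if _ : 0 ≤ k + m - n then
      A.coeff k * (gbinom k (k + m - n).toNat • (d^[(k + m - n).toNat] (B.coeff m)))
      else 0) = if 0 ≤ k + m - n then mterm A B n k ((k + m - n).toNat) else 0 := by
    intro k m
    by_cases hc : 0 ≤ k + m - n
    · rw [dif_pos hc, if_pos hc, mterm]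
      have hm : n - k + ((k + m - n).toNat : ℤ) = m := by omega
      rw [hm]
    · rw [dif_neg hc, if_neg hc]
  have hinner : ∀ k : ℤ, (∑ᶠ m : ℤ, if _ : 0 ≤ k + m - n then
      A.coeff k * (gbinom k (k + m - n).toNat • (d^[(k + m - n).toNat] (B.coeff m)))
      else 0) = ∑ l ∈ L, mterm A B n k l := by
    intro k
    simp only [hF]
    have hsupp : (Function.support fun m : ℤ =>
        if 0 ≤ k + m - n then mterm A B n k ((k + m - n).toNat) else 0)
        ⊆ ↑(L.image (fun l : ℕ => n - k + l)) := by
      intro m hm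
      rw [Function.mem_support] at hm
      by_cases hc : 0 ≤ k + m - n
      · rw [if_pos hc] at hm
        have hl := (hKL _ _ hm).2
        simp only [Finset.coe_image, Set.mem_image, Finset.mem_coe]
        exact ⟨(k + m - n).toNat, hl, by omega⟩
      · rw [if_neg hc] at hm; exact absurd rfl hm
    rw [finsum_eq_finset_sum_of_support_subset _ hsupp,
      Finset.sum_image (by intro a _ b _ hab; have hab' : n - k + (a:ℤ) = n - k + b := hab; omega)]
    apply Finset.sum_congr rfl
    intro l _
    rw [if_pos (by omega)]
    congr 1
    omega
  simp only [hinner]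
  have hsupp2 : (Function.support fun k : ℤ => ∑ l ∈ L, mterm A B n k l) ⊆ ↑K := by
    intro k hk
    rw [Function.mem_support] at hk
    obtain ⟨l, _, hl⟩ := Finset.exists_ne_zero_of_sum_ne_zero hk
    exact (hKL k l hl).1
  exact finsum_eq_finset_sum_of_support_subset _ hsupp2

lemma mul_coeff_bound {A B : PDO R d} {Na Nb : ℤ} (hA : ∀ j, Na < j → A.coeff j = 0)
    (hB : ∀ j, Nb < j → B.coeff j = 0) (n : ℤ) :
    (A * B).coeff n = ∑ k ∈ Finset.Icc (n - Nb) Na,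
      ∑ l ∈ Finset.range ((Na + Nb - n).toNat + 1), mterm A B n k l := by
  apply mul_coeff
  intro k l hne
  have h1 := mterm_coeff_left hne
  have h2 := mterm_coeff_right hne
  have hk : k ≤ Na := by by_contra hc; exact h1 (hA _ (by omega))
  have hm : n - k + l ≤ Nb := by by_contra hc; exact h2 (hB _ (by omega))
  constructor
  · rw [Finset.mem_Icc]; omega
  · rw [Finset.mem_range]; omega

lemma mul_coeff_zero {A B : PDO R d} {Na Nb : ℤ} (hA : ∀ j, Na < j → A.coeff j = 0)
    (hB : ∀ j, Nb < j → B.coeff j = 0) {n : ℤ} (hn : Na + Nb < n) :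
    (A * B).coeff n = 0 := by
  rw [mul_coeff A B n (K := ∅) (L := ∅) ?_, Finset.sum_empty]
  intro k l hne
  have h1 := mterm_coeff_left hne
  have h2 := mterm_coeff_right hne
  have hk : k ≤ Na := by by_contra hc; exact h1 (hA _ (by omega))
  have hm : n - k + l ≤ Nb := by by_contra hc; exact h2 (hB _ (by omega))
  omega

lemma zero_mul' (B : PDO R d) : (0 : PDO R d) * B = 0 := by
  apply ext'; funext n
  have : ((0 : PDO R d) * B).coeff n = ∑ k ∈ (∅ : Finset ℤ), ∑ l ∈ (∅ : Finset ℕ),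
      mterm 0 B n k l := by
    apply mul_coeff
    intro k l hne
    exact absurd rfl (mterm_coeff_left hne)
  rw [this, Finset.sum_empty]
  rfl

lemma mul_zero' (A : PDO R d) : A * (0 : PDO R d) = 0 := by
  apply ext'; funext n
  have : (A * (0 : PDO R d)).coeff n = ∑ k ∈ (∅ : Finset ℤ), ∑ l ∈ (∅ : Finset ℕ),
      mterm A 0 n k l := by
    apply mul_coeff
    intro k l hne
    exact absurd rfl (mterm_coeff_right hne)
  rw [this, Finset.sum_empty]
  rfl

lemma one_mul' (B : PDO R d) : (1 : PDO R d) * B = B := by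
  apply ext'; funext n
  have h1 : ∀ k : ℤ, (1 : PDO R d).coeff k = if k = 0 then 1 else 0 := fun _ => rfl
  have : ((1 : PDO R d) * B).coeff n = ∑ k ∈ ({0} : Finset ℤ), ∑ l ∈ ({0} : Finset ℕ),
      mterm 1 B n k l := by
    apply mul_coeff
    intro k l hne
    have hk : k = 0 := by
      by_contra hc
      exact mterm_coeff_left hne (by rw [h1, if_neg hc])
    constructor
    · simp [hk]
    · subst hk
      by_contra hc
      simp only [Finset.mem_singleton] at hc
      exact hne (by rw [mterm, gbinom_zero_left hc, zero_smul, mul_zero])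
  rw [this, Finset.sum_singleton, Finset.sum_singleton, mterm, h1, if_pos rfl, gbinom_zero,
    one_smul, one_mul]
  norm_num

lemma mterm_add_left (A A' B : PDO R d) (n k : ℤ) (l : ℕ) :
    mterm (A + A') B n k l = mterm A B n k l + mterm A' B n k l := by
  have : (A + A').coeff k = A.coeff k + A'.coeff k := rfl
  rw [mterm, mterm, mterm, this, add_mul]

lemma mterm_add_right (A B B' : PDO R d) (n k : ℤ) (l : ℕ) :
    mterm A (B + B') n k l = mterm A B n k l + mterm A B' n k l := by
  have : (B + B').coeff (n - k + l) = B.coeff (n - k + l) + B'.coeff (n - k + l) := rfl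
  rw [mterm, mterm, mterm, this, iterD_add, smul_add, mul_add]

lemma mterm_neg_left (A B : PDO R d) (n k : ℤ) (l : ℕ) :
    mterm (-A) B n k l = -mterm A B n k l := by
  have : (-A).coeff k = -A.coeff k := rfl
  rw [mterm, mterm, this, neg_mul]

lemma mterm_neg_right (A B : PDO R d) (n k : ℤ) (l : ℕ) :
    mterm A (-B) n k l = -mterm A B n k l := by
  have h0 : (-B).coeff (n - k + l) = -B.coeff (n - k + l) := rfl
  rw [mterm, mterm, h0, iterD_neg, smul_neg, mul_neg]

lemma add_mul' (A A' B : PDO R d) : (A + A') * B = A * B + A' * B := by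
  apply ext'; funext n
  obtain ⟨Na, hNa⟩ := A.bdd
  obtain ⟨Na', hNa'⟩ := A'.bdd
  obtain ⟨Nb, hNb⟩ := B.bdd
  have hA : ∀ j, max Na Na' < j → A.coeff j = 0 := fun j hj => hNa j (by omega)
  have hA' : ∀ j, max Na Na' < j → A'.coeff j = 0 := fun j hj => hNa' j (by omega)
  have hAA' : ∀ j, max Na Na' < j → (A + A').coeff j = 0 := by
    intro j hj
    show A.coeff j + A'.coeff j = 0
    rw [hA j hj, hA' j hj, add_zero]
  have hR : (A * B + A' * B).coeff n = (A * B).coeff n + (A' * B).coeff n := rfl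
  rw [hR, mul_coeff_bound hAA' hNb, mul_coeff_bound hA hNb, mul_coeff_bound hA' hNb]
  simp only [mterm_add_left, Finset.sum_add_distrib]

lemma mul_add' (A B B' : PDO R d) : A * (B + B') = A * B + A * B' := by
  apply ext'; funext n
  obtain ⟨Na, hNa⟩ := A.bdd
  obtain ⟨Nb, hNb⟩ := B.bdd
  obtain ⟨Nb', hNb'⟩ := B'.bdd
  have hB : ∀ j, max Nb Nb' < j → B.coeff j = 0 := fun j hj => hNb j (by omega)
  have hB' : ∀ j, max Nb Nb' < j → B'.coeff j = 0 := fun j hj => hNb' j (by omega)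
  have hBB' : ∀ j, max Nb Nb' < j → (B + B').coeff j = 0 := by
    intro j hj
    show B.coeff j + B'.coeff j = 0
    rw [hB j hj, hB' j hj, add_zero]
  have hR : (A * B + A * B').coeff n = (A * B).coeff n + (A * B').coeff n := rfl
  rw [hR, mul_coeff_bound hNa hBB', mul_coeff_bound hNa hB, mul_coeff_bound hNa hB']
  simp only [mterm_add_right, Finset.sum_add_distrib]

lemma neg_mul' (A B : PDO R d) : (-A) * B = -(A * B) := by
  apply ext'; funext n
  obtain ⟨Na, hNa⟩ := A.bdd
  obtain ⟨Nb, hNb⟩ := B.bdd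
  have hA' : ∀ j, Na < j → (-A).coeff j = 0 := by
    intro j hj
    show -A.coeff j = 0
    rw [hNa j hj, neg_zero]
  have hR : (-(A * B)).coeff n = -(A * B).coeff n := rfl
  rw [hR, mul_coeff_bound hA' hNb, mul_coeff_bound hNa hNb]
  simp only [mterm_neg_left, Finset.sum_neg_distrib]

lemma mul_neg' (A B : PDO R d) : A * (-B) = -(A * B) := by
  apply ext'; funext n
  obtain ⟨Na, hNa⟩ := A.bdd
  obtain ⟨Nb, hNb⟩ := B.bdd
  have hB' : ∀ j, Nb < j → (-B).coeff j = 0 := by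
    intro j hj
    show -B.coeff j = 0
    rw [hNb j hj, neg_zero]
  have hR : (-(A * B)).coeff n = -(A * B).coeff n := rfl
  rw [hR, mul_coeff_bound hNa hB', mul_coeff_bound hNa hNb]
  simp only [mterm_neg_right, Finset.sum_neg_distrib]

lemma sub_mul' (A A' B : PDO R d) : (A - A') * B = A * B - A' * B := by
  rw [sub_eq_add_neg, add_mul', neg_mul', ← sub_eq_add_neg]

lemma mul_sub' (A B B' : PDO R d) : A * (B - B') = A * B - A * B' := by
  rw [sub_eq_add_neg, mul_add', mul_neg', ← sub_eq_add_neg]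

end PDO

/-! ### Associativity of PDO multiplication -/

namespace PDO

variable {R : Type} [CommRing R] [Algebra ℚ R] {d : R →+ R}

set_option linter.unusedSectionVars false

/-- canonical term of the triple product -/
noncomputable def tterm (A B C : PDO R d) (n k p : ℤ) (α β : ℕ) : R :=
  (gbinom k α * gbinom (k + p - α) β) •
    (A.coeff k * (d^[α] (B.coeff p) * d^[β] (C.coeff (n - k - p + α + β))))

/-- left-associated expanded term -/
noncomputable def lterm (A B C : PDO R d) (n s k : ℤ) (β α : ℕ) : R :=
  (gbinom k α * gbinom s β) •
    (A.coeff k * (d^[α] (B.coeff (s - k + α)) * d^[β] (C.coeff (n - s + β))))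

/-- right-associated expanded term -/
noncomputable def rterm (A B C : PDO R d) (n k p : ℤ) (l j α : ℕ) : R :=
  ((gbinom k l * gbinom p j) * ((l.choose α : ℕ) : ℚ)) •
    (A.coeff k * (d^[α] (B.coeff p) * d^[(l - α) + j] (C.coeff (n - k + l - p + j))))

/-- canonical term with extra inner index -/
noncomputable def cterm (A B C : PDO R d) (n k p : ℤ) (α β j : ℕ) : R :=
  if j ≤ β then
    (gbinom k (α + β - j) * (((α + β - j).choose α : ℕ) : ℚ) * gbinom p j) •
      (A.coeff k * (d^[α] (B.coeff p) * d^[β] (C.coeff (n - k - p + α + β))))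
  else 0

lemma smul_arrange1 (x y z : R) (q r : ℚ) :
    (x * (q • y)) * (r • z) = (q * r) • (x * (y * z)) := by
  rw [mul_smul_comm, mul_smul_comm, smul_mul_assoc, smul_smul, mul_assoc, mul_comm r q]

lemma tterm_ne {A B C : PDO R d} {n k p : ℤ} {α β : ℕ} (h : tterm A B C n k p α β ≠ 0) :
    A.coeff k ≠ 0 ∧ B.coeff p ≠ 0 ∧ C.coeff (n - k - p + α + β) ≠ 0 := by
  refine ⟨fun h0 => h ?_, fun h0 => h ?_, fun h0 => h ?_⟩ <;> rw [tterm]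
  · rw [h0, zero_mul, smul_zero]
  · rw [h0, iterD_zero, zero_mul, mul_zero, smul_zero]
  · rw [h0, iterD_zero, mul_zero, mul_zero, smul_zero]

lemma lterm_ne {A B C : PDO R d} {n s k : ℤ} {β α : ℕ} (h : lterm A B C n s k β α ≠ 0) :
    A.coeff k ≠ 0 ∧ B.coeff (s - k + α) ≠ 0 ∧ C.coeff (n - s + β) ≠ 0 := by
  refine ⟨fun h0 => h ?_, fun h0 => h ?_, fun h0 => h ?_⟩ <;> rw [lterm]
  · rw [h0, zero_mul, smul_zero]
  · rw [h0, iterD_zero, zero_mul, mul_zero, smul_zero]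
  · rw [h0, iterD_zero, mul_zero, mul_zero, smul_zero]

lemma rterm_ne {A B C : PDO R d} {n k p : ℤ} {l j α : ℕ} (h : rterm A B C n k p l j α ≠ 0) :
    A.coeff k ≠ 0 ∧ B.coeff p ≠ 0 ∧ C.coeff (n - k + l - p + j) ≠ 0 ∧ α ≤ l := by
  refine ⟨fun h0 => h ?_, fun h0 => h ?_, fun h0 => h ?_, ?_⟩
  · rw [rterm, h0, zero_mul, smul_zero]
  · rw [rterm, h0, iterD_zero, zero_mul, mul_zero, smul_zero]
  · rw [rterm, h0, iterD_zero, mul_zero, mul_zero, smul_zero]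
  · by_contra hc
    exact h (by rw [rterm, Nat.choose_eq_zero_of_lt (by omega), Nat.cast_zero, mul_zero,
      zero_smul])

lemma cterm_ne {A B C : PDO R d} {n k p : ℤ} {α β j : ℕ} (h : cterm A B C n k p α β j ≠ 0) :
    A.coeff k ≠ 0 ∧ B.coeff p ≠ 0 ∧ C.coeff (n - k - p + α + β) ≠ 0 ∧ j ≤ β := by
  have hj : j ≤ β := by
    by_contra hc
    exact h (by rw [cterm, if_neg hc])
  rw [cterm, if_pos hj] at h
  refine ⟨fun h0 => h ?_, fun h0 => h ?_, fun h0 => h ?_, hj⟩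
  · rw [h0, zero_mul, smul_zero]
  · rw [h0, iterD_zero, zero_mul, mul_zero, smul_zero]
  · rw [h0, iterD_zero, mul_zero, mul_zero, smul_zero]

lemma mul_assoc' (hd : Leibniz d) (A B C : PDO R d) : A * B * C = A * (B * C) := by
  apply ext'; funext n
  obtain ⟨a, ha⟩ := A.bdd
  obtain ⟨b, hb⟩ := B.bdd
  obtain ⟨c, hc⟩ := C.bdd
  have hab : ∀ j, a + b < j → (A * B).coeff j = 0 := fun j hj => mul_coeff_zero ha hb hj
  have hbc : ∀ j, b + c < j → (B * C).coeff j = 0 := fun j hj => mul_coeff_zero hb hc hj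
  -- Notation (we inline):  Λ = (a+b+c-n).toNat + 1, L = range Λ,
  -- K = Icc (n-b-c) a, P = Icc (n-a-c) b, S = Icc (n-c) (a+b)
  -- Step L1+L2: left side as nested 4-fold sum of lterm
  have keyL : (A * B * C).coeff n
      = ∑ s ∈ Finset.Icc (n - c) (a + b), ∑ β ∈ Finset.range ((a+b+c-n).toNat + 1),
        ∑ k ∈ Finset.Icc (n - b - c) a, ∑ α ∈ Finset.range ((a+b+c-n).toNat + 1),
          lterm A B C n s k β α := by
    have step1 : (A * B * C).coeff n
        = ∑ s ∈ Finset.Icc (n - c) (a + b), ∑ β ∈ Finset.range ((a+b+c-n).toNat + 1),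
            mterm (A * B) C n s β := by
      apply mul_coeff
      intro s β hne
      have h1 := mterm_coeff_left hne
      have h2 := mterm_coeff_right hne
      have hs : s ≤ a + b := by by_contra hcon; exact h1 (hab _ (by omega))
      have hC : n - s + β ≤ c := by by_contra hcon; exact h2 (hc _ (by omega))
      constructor
      · rw [Finset.mem_Icc]; omega
      · rw [Finset.mem_range]; omega
    rw [step1]
    apply Finset.sum_congr rfl
    intro s hs
    rw [Finset.mem_Icc] at hs
    apply Finset.sum_congr rfl
    intro β hβ
    have hexp : (A * B).coeff s = ∑ k ∈ Finset.Icc (n - b - c) a,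
        ∑ α ∈ Finset.range ((a+b+c-n).toNat + 1), mterm A B s k α := by
      apply mul_coeff
      intro k α hne
      have h1 := mterm_coeff_left hne
      have h2 := mterm_coeff_right hne
      have hk : k ≤ a := by by_contra hcon; exact h1 (ha _ (by omega))
      have hB : s - k + α ≤ b := by by_contra hcon; exact h2 (hb _ (by omega))
      constructor
      · rw [Finset.mem_Icc]; omega
      · rw [Finset.mem_range]; omega
    rw [mterm, hexp, Finset.sum_mul]
    apply Finset.sum_congr rfl
    intro k hk
    rw [Finset.sum_mul]
    apply Finset.sum_congr rfl
    intro α hα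
    rw [mterm, lterm]
    exact smul_arrange1 _ _ _ _ _
  -- Step R1+R2: right side as nested 5-fold sum of rterm
  have keyR : (A * (B * C)).coeff n
      = ∑ k ∈ Finset.Icc (n - b - c) a, ∑ l ∈ Finset.range ((a+b+c-n).toNat + 1),
        ∑ p ∈ Finset.Icc (n - a - c) b, ∑ j ∈ Finset.range ((a+b+c-n).toNat + 1),
        ∑ α ∈ Finset.range ((a+b+c-n).toNat + 1), rterm A B C n k p l j α := by
    have step1 : (A * (B * C)).coeff n
        = ∑ k ∈ Finset.Icc (n - b - c) a, ∑ l ∈ Finset.range ((a+b+c-n).toNat + 1),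
            mterm A (B * C) n k l := by
      apply mul_coeff
      intro k l hne
      have h1 := mterm_coeff_left hne
      have h2 := mterm_coeff_right hne
      have hk : k ≤ a := by by_contra hcon; exact h1 (ha _ (by omega))
      have hBC : n - k + l ≤ b + c := by by_contra hcon; exact h2 (hbc _ (by omega))
      constructor
      · rw [Finset.mem_Icc]; omega
      · rw [Finset.mem_range]; omega
    rw [step1]
    apply Finset.sum_congr rfl
    intro k hk
    rw [Finset.mem_Icc] at hk
    apply Finset.sum_congr rfl
    intro l hl
    rw [Finset.mem_range] at hl
    have hexp : (B * C).coeff (n - k + l) = ∑ p ∈ Finset.Icc (n - a - c) b,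
        ∑ j ∈ Finset.range ((a+b+c-n).toNat + 1), mterm B C (n - k + l) p j := by
      apply mul_coeff
      intro p j hne
      have h1 := mterm_coeff_left hne
      have h2 := mterm_coeff_right hne
      have hp : p ≤ b := by by_contra hcon; exact h1 (hb _ (by omega))
      have hC : (n - k + l) - p + j ≤ c := by by_contra hcon; exact h2 (hc _ (by omega))
      constructor
      · rw [Finset.mem_Icc]; omega
      · rw [Finset.mem_range]; omega
    have hinner : d^[l] ((B * C).coeff (n - k + l))
        = ∑ p ∈ Finset.Icc (n - a - c) b, ∑ j ∈ Finset.range ((a+b+c-n).toNat + 1),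
            ∑ α ∈ Finset.range ((a+b+c-n).toNat + 1),
            ((gbinom p j * ((l.choose α : ℕ) : ℚ)) •
              (d^[α] (B.coeff p) * d^[(l - α) + j] (C.coeff (n - k + l - p + j)))) := by
      rw [hexp, iterD_sum]
      apply Finset.sum_congr rfl
      intro p hp
      rw [iterD_sum]
      apply Finset.sum_congr rfl
      intro j hj
      rw [mterm, mul_smul_comm, iterD_qsmul,
        iterD_leibniz_pad hd (Λ := (a+b+c-n).toNat + 1) (by omega), Finset.smul_sum]
      apply Finset.sum_congr rfl
      intro α hα
      rw [← Function.iterate_add_apply]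
      rw [← Nat.cast_smul_eq_nsmul ℚ, smul_smul]
    rw [mterm, hinner, Finset.smul_sum, Finset.mul_sum]
    apply Finset.sum_congr rfl
    intro p hp
    rw [Finset.smul_sum, Finset.mul_sum]
    apply Finset.sum_congr rfl
    intro j hj
    rw [Finset.smul_sum, Finset.mul_sum]
    apply Finset.sum_congr rfl
    intro α hα
    rw [rterm, smul_smul, mul_smul_comm]
    congr 1
    ring
  -- Step: bijection for the left side
  have bijL : ∑ x ∈ ((Finset.Icc (n - c) (a + b)) ×ˢ (Finset.range ((a+b+c-n).toNat + 1)))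
        ×ˢ ((Finset.Icc (n - b - c) a) ×ˢ (Finset.range ((a+b+c-n).toNat + 1))),
        lterm A B C n x.1.1 x.2.1 x.1.2 x.2.2
      = ∑ y ∈ ((Finset.Icc (n - b - c) a) ×ˢ (Finset.Icc (n - a - c) b))
        ×ˢ ((Finset.range ((a+b+c-n).toNat + 1)) ×ˢ (Finset.range ((a+b+c-n).toNat + 1))),
        tterm A B C n y.1.1 y.1.2 y.2.1 y.2.2 := by
    apply Finset.sum_bij_ne_zero
      (i := fun x _ _ => ((x.2.1, x.1.1 - x.2.1 + (x.2.2:ℤ)), (x.2.2, x.1.2)))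
    · intro x hx hne
      obtain ⟨hA, hB, hC⟩ := lterm_ne hne
      have h1 : x.2.1 ≤ a := by by_contra hcon; exact hA (ha _ (by omega))
      have h2 : x.1.1 - x.2.1 + (x.2.2:ℤ) ≤ b := by by_contra hcon; exact hB (hb _ (by omega))
      have h3 : n - x.1.1 + (x.1.2:ℤ) ≤ c := by by_contra hcon; exact hC (hc _ (by omega))
      simp only [Finset.mem_product, Finset.mem_Icc, Finset.mem_range] at hx ⊢
      omega
    · intro x1 h11 h12 x2 h21 h22 heq
      simp only [Prod.mk.injEq] at heq
      simp only [Prod.ext_iff]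
      omega
    · intro y hy hgy
      obtain ⟨hA, hB, hC⟩ := tterm_ne hgy
      have h1 : y.1.1 ≤ a := by by_contra hcon; exact hA (ha _ (by omega))
      have h2 : y.1.2 ≤ b := by by_contra hcon; exact hB (hb _ (by omega))
      have h3 : n - y.1.1 - y.1.2 + (y.2.1:ℤ) + (y.2.2:ℤ) ≤ c := by
        by_contra hcon; exact hC (hc _ (by omega))
      simp only [Finset.mem_product, Finset.mem_Icc, Finset.mem_range] at hy
      have hval : lterm A B C n (y.1.1 + y.1.2 - (y.2.1:ℤ)) y.1.1 y.2.2 y.2.1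
          = tterm A B C n y.1.1 y.1.2 y.2.1 y.2.2 := by
        rw [lterm, tterm]
        have e1 : y.1.1 + y.1.2 - (y.2.1:ℤ) - y.1.1 + (y.2.1:ℤ) = y.1.2 := by ring
        have e2 : n - (y.1.1 + y.1.2 - (y.2.1:ℤ)) + (y.2.2:ℤ)
            = n - y.1.1 - y.1.2 + (y.2.1:ℤ) + (y.2.2:ℤ) := by ring
        rw [e1, e2]
      refine ⟨((y.1.1 + y.1.2 - (y.2.1:ℤ), y.2.2), (y.1.1, y.2.1)), ?_, ?_, ?_⟩
      · simp only [Finset.mem_product, Finset.mem_Icc, Finset.mem_range]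
        omega
      · rw [hval]; exact hgy
      · exact Prod.ext (Prod.ext rfl (by ring)) (Prod.ext rfl rfl)
    · intro x hx hne
      rw [lterm, tterm]
      have e1 : x.2.1 + (x.1.1 - x.2.1 + (x.2.2:ℤ)) - (x.2.2:ℤ) = x.1.1 := by ring
      have e2 : n - x.2.1 - (x.1.1 - x.2.1 + (x.2.2:ℤ)) + (x.2.2:ℤ) + (x.1.2:ℤ)
          = n - x.1.1 + (x.1.2:ℤ) := by ring
      rw [e1, e2]
  -- Step: bijection for the right side
  have bijR : ∑ x ∈ ((Finset.Icc (n - b - c) a) ×ˢ (Finset.range ((a+b+c-n).toNat + 1)))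
        ×ˢ ((Finset.Icc (n - a - c) b) ×ˢ ((Finset.range ((a+b+c-n).toNat + 1))
          ×ˢ (Finset.range ((a+b+c-n).toNat + 1)))),
        rterm A B C n x.1.1 x.2.1 x.1.2 x.2.2.1 x.2.2.2
      = ∑ y ∈ (((Finset.Icc (n - b - c) a) ×ˢ (Finset.Icc (n - a - c) b))
        ×ˢ ((Finset.range ((a+b+c-n).toNat + 1)) ×ˢ (Finset.range ((a+b+c-n).toNat + 1))))
        ×ˢ (Finset.range ((a+b+c-n).toNat + 1)),
        cterm A B C n y.1.1.1 y.1.1.2 y.1.2.1 y.1.2.2 y.2 := by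
    apply Finset.sum_bij_ne_zero
      (i := fun x _ _ => (((x.1.1, x.2.1), (x.2.2.2, (x.1.2 - x.2.2.2) + x.2.2.1)), x.2.2.1))
    · intro x hx hne
      obtain ⟨hA, hB, hC, hαl⟩ := rterm_ne hne
      have h1 : x.1.1 ≤ a := by by_contra hcon; exact hA (ha _ (by omega))
      have h2 : x.2.1 ≤ b := by by_contra hcon; exact hB (hb _ (by omega))
      have h3 : n - x.1.1 + (x.1.2:ℤ) - x.2.1 + (x.2.2.1:ℤ) ≤ c := by
        by_contra hcon; exact hC (hc _ (by omega))
      simp only [Finset.mem_product, Finset.mem_Icc, Finset.mem_range] at hx ⊢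
      omega
    · intro x1 h11 h12 x2 h21 h22 heq
      have hl1 := (rterm_ne h12).2.2.2
      have hl2 := (rterm_ne h22).2.2.2
      simp only [Prod.mk.injEq] at heq
      simp only [Prod.ext_iff]
      omega
    · intro y hy hgy
      obtain ⟨hA, hB, hC, hjβ⟩ := cterm_ne hgy
      have h1 : y.1.1.1 ≤ a := by by_contra hcon; exact hA (ha _ (by omega))
      have h2 : y.1.1.2 ≤ b := by by_contra hcon; exact hB (hb _ (by omega))
      have h3 : n - y.1.1.1 - y.1.1.2 + (y.1.2.1:ℤ) + (y.1.2.2:ℤ) ≤ c := by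
        by_contra hcon; exact hC (hc _ (by omega))
      simp only [Finset.mem_product, Finset.mem_Icc, Finset.mem_range] at hy
      have hval : rterm A B C n y.1.1.1 y.1.1.2 (y.1.2.1 + (y.1.2.2 - y.2)) y.2 y.1.2.1
          = cterm A B C n y.1.1.1 y.1.1.2 y.1.2.1 y.1.2.2 y.2 := by
        rw [rterm, cterm, if_pos hjβ]
        have e1 : y.1.2.1 + y.1.2.2 - y.2 = y.1.2.1 + (y.1.2.2 - y.2) := by omega
        have e2 : (y.1.2.1 + (y.1.2.2 - y.2)) - y.1.2.1 + y.2 = y.1.2.2 := by omega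
        have e3 : n - y.1.1.1 + (((y.1.2.1 + (y.1.2.2 - y.2)) : ℕ) : ℤ) - y.1.1.2 + (y.2:ℤ)
            = n - y.1.1.1 - y.1.1.2 + (y.1.2.1:ℤ) + (y.1.2.2:ℤ) := by omega
        rw [e1, e2, e3]
        congr 1
        ring
      refine ⟨((y.1.1.1, y.1.2.1 + (y.1.2.2 - y.2)), (y.1.1.2, (y.2, y.1.2.1))), ?_, ?_, ?_⟩
      · simp only [Finset.mem_product, Finset.mem_Icc, Finset.mem_range]
        omega
      · show rterm A B C n y.1.1.1 y.1.1.2 (y.1.2.1 + (y.1.2.2 - y.2)) y.2 y.1.2.1 ≠ 0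
        rw [hval]; exact hgy
      · exact Prod.ext (Prod.ext (Prod.ext rfl rfl) (Prod.ext rfl
          (show ((y.1.2.1 + (y.1.2.2 - y.2)) - y.1.2.1) + y.2 = y.1.2.2 by omega))) rfl
    · intro x hx hne
      have hαl := (rterm_ne hne).2.2.2
      show rterm A B C n x.1.1 x.2.1 x.1.2 x.2.2.1 x.2.2.2
          = cterm A B C n x.1.1 x.2.1 x.2.2.2 ((x.1.2 - x.2.2.2) + x.2.2.1) x.2.2.1
      rw [rterm, cterm, if_pos (by omega : x.2.2.1 ≤ (x.1.2 - x.2.2.2) + x.2.2.1)]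
      have e1 : x.2.2.2 + ((x.1.2 - x.2.2.2) + x.2.2.1) - x.2.2.1 = x.1.2 := by omega
      have e2 : n - x.1.1 - x.2.1 + (x.2.2.2:ℤ) + (((x.1.2 - x.2.2.2) + x.2.2.1 : ℕ):ℤ)
          = n - x.1.1 + (x.1.2:ℤ) - x.2.1 + (x.2.2.1:ℤ) := by omega
      rw [e1, e2]
      congr 1
      ring
  -- Step: sum over the extra index j
  have sumj : ∑ y ∈ (((Finset.Icc (n - b - c) a) ×ˢ (Finset.Icc (n - a - c) b))
        ×ˢ ((Finset.range ((a+b+c-n).toNat + 1)) ×ˢ (Finset.range ((a+b+c-n).toNat + 1))))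
        ×ˢ (Finset.range ((a+b+c-n).toNat + 1)),
        cterm A B C n y.1.1.1 y.1.1.2 y.1.2.1 y.1.2.2 y.2
      = ∑ z ∈ ((Finset.Icc (n - b - c) a) ×ˢ (Finset.Icc (n - a - c) b))
        ×ˢ ((Finset.range ((a+b+c-n).toNat + 1)) ×ˢ (Finset.range ((a+b+c-n).toNat + 1))),
        tterm A B C n z.1.1 z.1.2 z.2.1 z.2.2 := by
    rw [Finset.sum_product]
    apply Finset.sum_congr rfl
    intro z hz
    simp only [Finset.mem_product, Finset.mem_Icc, Finset.mem_range] at hz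
    have hcast : ∀ j : ℕ, cterm A B C n z.1.1 z.1.2 z.2.1 z.2.2 j
        = (if j ≤ z.2.2 then gbinom z.1.1 (z.2.1 + z.2.2 - j)
            * (((z.2.1 + z.2.2 - j).choose z.2.1 : ℕ) : ℚ) * gbinom z.1.2 j else 0) •
          (A.coeff z.1.1 * (d^[z.2.1] (B.coeff z.1.2)
            * d^[z.2.2] (C.coeff (n - z.1.1 - z.1.2 + z.2.1 + z.2.2)))) := by
      intro j
      rw [cterm]
      by_cases hj : j ≤ z.2.2
      · rw [if_pos hj, if_pos hj]
      · rw [if_neg hj, if_neg hj, zero_smul]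
    simp only [hcast]
    rw [← Finset.sum_smul, gbinom_assoc_key _ _ _ _ hz.2.2, tterm]
  rw [keyL, keyR]
  rw [show (∑ s ∈ Finset.Icc (n - c) (a + b), ∑ β ∈ Finset.range ((a+b+c-n).toNat + 1),
        ∑ k ∈ Finset.Icc (n - b - c) a, ∑ α ∈ Finset.range ((a+b+c-n).toNat + 1),
          lterm A B C n s k β α)
      = ∑ x ∈ ((Finset.Icc (n - c) (a + b)) ×ˢ (Finset.range ((a+b+c-n).toNat + 1)))
        ×ˢ ((Finset.Icc (n - b - c) a) ×ˢ (Finset.range ((a+b+c-n).toNat + 1))),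
        lterm A B C n x.1.1 x.2.1 x.1.2 x.2.2 by
      simp only [Finset.sum_product]]
  rw [show (∑ k ∈ Finset.Icc (n - b - c) a, ∑ l ∈ Finset.range ((a+b+c-n).toNat + 1),
        ∑ p ∈ Finset.Icc (n - a - c) b, ∑ j ∈ Finset.range ((a+b+c-n).toNat + 1),
        ∑ α ∈ Finset.range ((a+b+c-n).toNat + 1), rterm A B C n k p l j α)
      = ∑ x ∈ ((Finset.Icc (n - b - c) a) ×ˢ (Finset.range ((a+b+c-n).toNat + 1)))
        ×ˢ ((Finset.Icc (n - a - c) b) ×ˢ ((Finset.range ((a+b+c-n).toNat + 1))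
          ×ˢ (Finset.range ((a+b+c-n).toNat + 1)))),
        rterm A B C n x.1.1 x.2.1 x.1.2 x.2.2.1 x.2.2.2 by
      simp only [Finset.sum_product]]
  rw [bijL, bijR, sumj]

end PDO

/-! ### Solving the Sylvester equation `W*X + X*W = P` -/

namespace PDO

variable {R : Type} [CommRing R] [Algebra ℚ R] {d : R →+ R}

set_option linter.unusedSectionVars false

lemma sum_split {ι κ : Type*} [DecidableEq ι] [DecidableEq κ]
    (s : Finset ι) (t : Finset κ) (f : ι → κ → R) (a : ι) (b : κ)
    (ha : a ∈ s) (hb : b ∈ t) :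
    ∑ i ∈ s, ∑ j ∈ t, f i j
      = f a b + ∑ i ∈ s, ∑ j ∈ t, (if (i, j) ≠ (a, b) then f i j else 0) := by
  have hsplit : ∀ i ∈ s, ∀ j ∈ t, f i j
      = (if i = a then (if j = b then f i j else 0) else 0)
        + (if (i, j) ≠ (a, b) then f i j else 0) := by
    intro i _ j _
    by_cases hi : i = a
    · by_cases hj : j = b
      · subst hi; subst hj; simp
      · rw [if_pos hi, if_neg hj, if_pos (by simp [Prod.ext_iff, hj]), zero_add]
    · rw [if_neg hi, if_pos (by simp [Prod.ext_iff, hi]), zero_add]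
  rw [Finset.sum_congr rfl (fun i hi => Finset.sum_congr rfl (fun j hj => hsplit i hi j hj))]
  simp only [Finset.sum_add_distrib]
  congr 1
  have hinner : ∀ i ∈ s, (∑ j ∈ t, if i = a then (if j = b then f i j else 0) else 0)
      = if i = a then f i b else 0 := by
    intro i _
    by_cases hi : i = a
    · simp only [if_pos hi]
      subst hi
      rw [Finset.sum_ite_eq' t b (f i), if_pos hb]
    · simp only [if_neg hi, Finset.sum_const_zero]
  rw [Finset.sum_congr rfl hinner, Finset.sum_ite_eq' s a (fun i => f i b), if_pos ha]

/-- The part of `(W*X)ₙ + (X*W)ₙ` not involving `X_{n-1}`; depends on `X` only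
through the coefficients `X_m`, `m ≥ n`. -/
noncomputable def Efun (d : R →+ R) (W : PDO R d) (x : ℤ → R) (n N : ℤ) : R :=
  (∑ k ∈ Finset.Icc (n - N + 1) 1, ∑ l ∈ Finset.range ((N - n).toNat + 1),
    if (k, l) ≠ ((1 : ℤ), (0 : ℕ)) then
      W.coeff k * (gbinom k l • d^[l] (x (n - k + l))) else 0)
  + (∑ k ∈ Finset.Icc (n - 1) (N - 1), ∑ l ∈ Finset.range ((N - n).toNat + 1),
    if (k, l) ≠ ((n - 1 : ℤ), (0 : ℕ)) then
      x k * (gbinom k l • d^[l] (W.coeff (n - k + l))) else 0)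

lemma Efun_congr (W : PDO R d) (hW2 : ∀ k : ℤ, 1 < k → W.coeff k = 0)
    (x x' : ℤ → R) (n N : ℤ) (hxx : ∀ m, n ≤ m → x m = x' m) :
    Efun d W x n N = Efun d W x' n N := by
  rw [Efun, Efun]
  congr 1
  · apply Finset.sum_congr rfl
    intro k hk
    rw [Finset.mem_Icc] at hk
    apply Finset.sum_congr rfl
    intro l _
    by_cases hq : ((k, l) : ℤ × ℕ) ≠ (1, 0)
    · rw [if_pos hq, if_pos hq]
      have hq' : ¬(k = 1 ∧ l = 0) := by simpa [Prod.ext_iff] using hq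
      rw [hxx (n - k + l) (by omega)]
    · rw [if_neg hq, if_neg hq]
  · apply Finset.sum_congr rfl
    intro k hk
    rw [Finset.mem_Icc] at hk
    apply Finset.sum_congr rfl
    intro l _
    by_cases hq : ((k, l) : ℤ × ℕ) ≠ (n - 1, 0)
    · rw [if_pos hq, if_pos hq]
      have hq' : ¬(k = n - 1 ∧ l = 0) := by simpa [Prod.ext_iff] using hq
      by_cases hkn : n ≤ k
      · rw [hxx k hkn]
      · rw [hW2 (n - k + l) (by omega), iterD_zero, smul_zero, mul_zero, mul_zero]
    · rw [if_neg hq, if_neg hq]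

lemma Efun_zero (W : PDO R d) (n N : ℤ) : Efun d W (fun _ => 0) n N = 0 := by
  rw [Efun]
  rw [Finset.sum_eq_zero, Finset.sum_eq_zero, add_zero]
  · intro k _
    apply Finset.sum_eq_zero
    intro l _
    by_cases hq : ((k, l) : ℤ × ℕ) ≠ (n - 1, 0)
    · rw [if_pos hq, zero_mul]
    · rw [if_neg hq]
  · intro k _
    apply Finset.sum_eq_zero
    intro l _
    by_cases hq : ((k, l) : ℤ × ℕ) ≠ (1, 0)
    · rw [if_pos hq, iterD_zero, smul_zero, mul_zero]
    · rw [if_neg hq]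

lemma decomp (W : PDO R d) (h : Rˣ) (hW1 : W.coeff 1 = (h : R))
    (hW2 : ∀ k : ℤ, 1 < k → W.coeff k = 0)
    (X : PDO R d) (N : ℤ) (hX : ∀ j, N - 1 < j → X.coeff j = 0) (n : ℤ) (hn : n ≤ N) :
    (W * X).coeff n + (X * W).coeff n
      = 2 * ((h : R) * X.coeff (n - 1)) + Efun d W X.coeff n N := by
  have h1 : (W * X).coeff n = ∑ k ∈ Finset.Icc (n - N + 1) 1,
      ∑ l ∈ Finset.range ((N - n).toNat + 1), mterm W X n k l := by
    apply mul_coeff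
    intro k l hne
    have hA := mterm_coeff_left hne
    have hB := mterm_coeff_right hne
    have hk : k ≤ 1 := by by_contra hcon; exact hA (hW2 _ (by omega))
    have hm : n - k + l ≤ N - 1 := by by_contra hcon; exact hB (hX _ (by omega))
    constructor
    · rw [Finset.mem_Icc]; omega
    · rw [Finset.mem_range]; omega
  have h2 : (X * W).coeff n = ∑ k ∈ Finset.Icc (n - 1) (N - 1),
      ∑ l ∈ Finset.range ((N - n).toNat + 1), mterm X W n k l := by
    apply mul_coeff
    intro k l hne
    have hA := mterm_coeff_left hne
    have hB := mterm_coeff_right hne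
    have hk : k ≤ N - 1 := by by_contra hcon; exact hA (hX _ (by omega))
    have hm : n - k + l ≤ 1 := by by_contra hcon; exact hB (hW2 _ (by omega))
    constructor
    · rw [Finset.mem_Icc]; omega
    · rw [Finset.mem_range]; omega
  rw [sum_split _ _ _ (1 : ℤ) (0 : ℕ) (by rw [Finset.mem_Icc]; omega)
    (by rw [Finset.mem_range]; omega)] at h1
  rw [sum_split _ _ _ (n - 1 : ℤ) (0 : ℕ) (by rw [Finset.mem_Icc]; omega)
    (by rw [Finset.mem_range]; omega)] at h2
  rw [h1, h2]
  have hm1 : mterm W X n 1 0 = (h : R) * X.coeff (n - 1) := by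
    rw [mterm, hW1]
    have e1 : n - 1 + ((0:ℕ):ℤ) = n - 1 := by simp
    rw [e1, gbinom_zero, one_smul]
    rfl
  have hm2 : mterm X W n (n - 1) 0 = X.coeff (n - 1) * (h : R) := by
    rw [mterm]
    have e1 : n - (n - 1) + ((0:ℕ):ℤ) = 1 := by simp
    rw [e1, gbinom_zero, one_smul]
    show X.coeff (n-1) * W.coeff 1 = _
    rw [hW1]
  rw [hm1, hm2, Efun]
  simp only [mterm]
  ring

lemma two_unit_cancel (h : Rˣ) (x : R) (hx : 2 * ((h : R) * x) = 0) : x = 0 := by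
  have h1 : ((h⁻¹ : Rˣ) : R) * (2 * ((h : R) * x)) = 0 := by rw [hx, mul_zero]
  have h2 : ((h⁻¹ : Rˣ) : R) * (2 * ((h : R) * x)) = 2 * x := by
    rw [show ((h⁻¹ : Rˣ) : R) * (2 * ((h : R) * x))
      = 2 * ((((h⁻¹ : Rˣ) : R) * (h : R)) * x) from by ring, Units.inv_mul, one_mul]
  have h3 : (2 : R) * x = 0 := by rw [← h2, h1]
  have h4 : (2 : R) * x = (2 : ℚ) • x := by
    rw [two_smul, two_mul]
  have h5 : ((2 : ℚ))⁻¹ • ((2:ℚ) • x) = ((2:ℚ))⁻¹ • ((0:R)) := by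
    rw [← h4, h3]
  rw [smul_smul, smul_zero] at h5
  norm_num at h5
  exact h5

lemma sylvester_zero (W : PDO R d) (h : Rˣ) (hW1 : W.coeff 1 = (h : R))
    (hW2 : ∀ k : ℤ, 1 < k → W.coeff k = 0) (Y : PDO R d)
    (hY : W * Y + Y * W = 0) : Y = 0 := by
  obtain ⟨Ny, hNy⟩ := Y.bdd
  have hX : ∀ j, (Ny + 1) - 1 < j → Y.coeff j = 0 := by
    intro j hj; exact hNy j (by omega)
  have key : ∀ t : ℕ, Y.coeff (Ny + 1 - 1 - t) = 0 := by
    intro t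
    induction t using Nat.strong_induction_on with
    | _ t ih =>
      have hup : ∀ m, (Ny + 1) - t ≤ m → Y.coeff m = 0 := by
        intro m hm
        by_cases hm2 : (Ny + 1) - 1 < m
        · exact hX m hm2
        · have h5 := ih (Ny + 1 - 1 - m).toNat (by omega)
          rw [show Ny + 1 - 1 - ((Ny + 1 - 1 - m).toNat : ℤ) = m from by omega] at h5
          exact h5
      have hd0 := decomp W h hW1 hW2 Y (Ny + 1) hX ((Ny + 1) - t) (by omega)
      have hzero : (W * Y).coeff ((Ny + 1) - t) + (Y * W).coeff ((Ny + 1) - t) = 0 := by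
        have e : (W * Y + Y * W).coeff ((Ny + 1) - t)
            = (W * Y).coeff ((Ny + 1) - t) + (Y * W).coeff ((Ny + 1) - t) := rfl
        rw [← e, hY]
        rfl
      have hE : Efun d W Y.coeff ((Ny + 1) - t) (Ny + 1) = 0 := by
        rw [Efun_congr W hW2 _ (fun _ => 0) _ _ (fun m hm => hup m hm)]
        exact Efun_zero W _ _
      rw [hd0, hE, add_zero] at hzero
      have := two_unit_cancel h _ hzero
      rw [show Ny + 1 - 1 - (t:ℤ) = (Ny + 1) - t - 1 from by omega]
      exact this
  apply ext'; funext j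
  show Y.coeff j = 0
  by_cases hj : Ny + 1 - 1 < j
  · exact hX j hj
  · have h5 := key (Ny + 1 - 1 - j).toNat
    rw [show Ny + 1 - 1 - ((Ny + 1 - 1 - j).toNat : ℤ) = j from by omega] at h5
    exact h5

lemma sylvester_unique (W : PDO R d) (h : Rˣ) (hW1 : W.coeff 1 = (h : R))
    (hW2 : ∀ k : ℤ, 1 < k → W.coeff k = 0) (hd : Leibniz d) {Y Z : PDO R d}
    (hYZ : W * Y + Y * W = W * Z + Z * W) : Y = Z := by
  have h0 : W * (Y - Z) + (Y - Z) * W = 0 := by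
    rw [mul_sub', sub_mul']
    rw [show W * Y - W * Z + (Y * W - Z * W) = (W * Y + Y * W) - (W * Z + Z * W) from by abel,
      hYZ, sub_self]
  have := sylvester_zero W h hW1 hW2 _ h0
  rwa [sub_eq_zero] at this

/-- Recursive construction of the solution coefficients. -/
noncomputable def solveG {R : Type} [CommRing R] [Algebra ℚ R] {d : R →+ R}
    (W : PDO R d) (hinv : R) (P : PDO R d) (N : ℤ) : ℕ → R
  | t => (2 : ℚ)⁻¹ • (hinv * (P.coeff (N - t)
      - Efun d W (fun j => if hj : N - (t:ℤ) ≤ j ∧ j ≤ N - 1 then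
          solveG W hinv P N (N - 1 - j).toNat else 0) (N - t) N))
  termination_by t => t
  decreasing_by omega

lemma sylvester_solve (W : PDO R d) (h : Rˣ) (hW1 : W.coeff 1 = (h : R))
    (hW2 : ∀ k : ℤ, 1 < k → W.coeff k = 0) (Pz : PDO R d) :
    ∃ X : PDO R d, W * X + X * W = Pz := by
  obtain ⟨N, hN⟩ := Pz.bdd
  set g : ℕ → R := solveG W ((h⁻¹ : Rˣ) : R) Pz N with hg
  set xf : ℤ → R := fun j => if j ≤ N - 1 then g (N - 1 - j).toNat else 0 with hxf
  have hbdd : ∀ j : ℤ, N - 1 < j → xf j = 0 := by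
    intro j hj
    rw [hxf]
    exact if_neg (by omega)
  set X : PDO R d := ⟨xf, ⟨N - 1, hbdd⟩⟩ with hXdef
  have hXc : ∀ j, X.coeff j = xf j := fun _ => rfl
  have halg : ∀ s : R, 2 * ((h : R) * ((2 : ℚ)⁻¹ • (((h⁻¹ : Rˣ) : R) * s))) = s := by
    intro s
    rw [mul_smul_comm, mul_smul_comm]
    rw [show (h : R) * (((h⁻¹ : Rˣ) : R) * s) = ((h : R) * ((h⁻¹ : Rˣ) : R)) * s from by ring,
      Units.mul_inv, one_mul]
    rw [show (2 : R) * s = (2 : ℚ) • s from by rw [two_smul, two_mul], smul_smul]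
    norm_num
  have hkey : ∀ n : ℤ, n ≤ N →
      2 * ((h : R) * X.coeff (n - 1)) = Pz.coeff n - Efun d W X.coeff n N := by
    intro n hn
    have ht : X.coeff (n - 1) = g (N - n).toNat := by
      show (if n - 1 ≤ N - 1 then g (N - 1 - (n - 1)).toNat else 0) = g (N - n).toNat
      rw [if_pos (by omega : n - 1 ≤ N - 1)]
      congr 1
      omega
    rw [ht, hg, solveG]
    have hNn : N - (((N - n).toNat : ℕ) : ℤ) = n := by omega
    rw [hNn, halg]
    congr 1
    apply Efun_congr W hW2
    intro m hm
    by_cases h1 : m ≤ N - 1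
    · rw [dif_pos ⟨hm, h1⟩]
      show solveG W ((h⁻¹ : Rˣ) : R) Pz N (N - 1 - m).toNat
          = if m ≤ N - 1 then g (N - 1 - m).toNat else 0
      rw [if_pos h1]
    · rw [dif_neg (by omega)]
      show (0 : R) = if m ≤ N - 1 then g (N - 1 - m).toNat else 0
      rw [if_neg h1]
  refine ⟨X, ?_⟩
  apply ext'
  funext n
  have hco : (W * X + X * W).coeff n = (W * X).coeff n + (X * W).coeff n := rfl
  by_cases hn : n ≤ N
  · rw [hco, decomp W h hW1 hW2 X N (fun j hj => hbdd j hj) n hn, hkey n hn]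
    ring
  · rw [hco, mul_coeff_zero hW2 (fun j hj => hbdd j hj) (by omega : (1:ℤ) + (N-1) < n),
      mul_coeff_zero (fun j hj => hbdd j hj) hW2 (by omega : (N-1) + 1 < n), hN n (by omega),
      add_zero]

end PDO

/-! ### Final algebraic lemmas and the main theorem -/

namespace PDO

variable {R : Type} [CommRing R] [Algebra ℚ R] {d : R →+ R}

set_option linter.unusedSectionVars false

lemma pos_add_negp (A : PDO R d) : PDO.pos A + PDO.negp A = A := by
  apply ext'; funext n
  show (if 0 ≤ n then A.coeff n else 0) + (if n < 0 then A.coeff n else 0) = A.coeff n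
  by_cases hn : 0 ≤ n
  · rw [if_pos hn, if_neg (by omega), add_zero]
  · rw [if_neg hn, if_pos (by omega), zero_add]

lemma pow_succ' (W : PDO R d) (m : ℕ) : W ^ (m + 1) = W ^ m * W := rfl

lemma pow_one' (W : PDO R d) : W ^ 1 = W := by
  show (1 : PDO R d) * W = W
  exact one_mul' W

lemma comm_sq (hd : Leibniz d) (W M : PDO R d) :
    W * comm W M + comm W M * W = comm (W * W) M := by
  rw [comm, comm, mul_sub', sub_mul', ← mul_assoc' hd W W M, ← mul_assoc' hd W M W,
    mul_assoc' hd M W W]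
  abel

lemma telescope (hd : Leibniz d) (W M : PDO R d) (N : ℕ) :
    W ^ N * comm W M + comm (W ^ N) M * W = comm (W ^ (N + 1)) M := by
  rw [comm, comm, comm, pow_succ', mul_sub', sub_mul', ← mul_assoc' hd (W ^ N) W M,
    ← mul_assoc' hd (W ^ N) M W, mul_assoc' hd M (W ^ N) W]
  abel

end PDO

namespace EPDO

variable {R : Type} [CommRing R] [Algebra ℚ R] {d : R →+ R}

set_option linter.unusedSectionVars false

theorem ext' {A B : EPDO R d} (h1 : A.re = B.re) (h2 : A.im = B.im) : A = B := by
  cases A; cases B; cases h1; cases h2; rfl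

lemma eps_mul_lift (Z : PDO R d) :
    EPDO.eps * EPDO.lift Z = (⟨0, Z⟩ : EPDO R d) := by
  apply ext'
  · show (0 : PDO R d) * Z = 0
    exact PDO.zero_mul' Z
  · show (0 : PDO R d) * 0 + 1 * Z = Z
    rw [PDO.zero_mul', PDO.one_mul', zero_add]

lemma one_mul' (T : EPDO R d) : (1 : EPDO R d) * T = T := by
  apply ext'
  · show (1 : PDO R d) * T.re = T.re
    exact PDO.one_mul' _
  · show (1 : PDO R d) * T.im + 0 * T.re = T.im
    rw [PDO.one_mul', PDO.zero_mul', add_zero]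

lemma pow_one' (T : EPDO R d) : T ^ 1 = T := by
  show (1 : EPDO R d) * T = T
  exact one_mul' T

lemma pow_succ' (T : EPDO R d) (m : ℕ) : T ^ (m + 1) = T ^ m * T := rfl

end EPDO


/-- For `L̃ := L − ε[L,M]₊` and `L_G := L + ε[L,M]₋`, each admits a unique square root with
`ε⁰`-part `L^(1/2)`; these satisfy `L_G^(1/2) = L̃^(1/2) + ε[L^(1/2), M]`, and for all `n`,
`L_G^(n+1/2) = L̃^(n+1/2) + ε[L^(n+1/2), M]`, hence
`(L_G^(n+1/2))₋ = (L̃^(n+1/2) + ε[L^(n+1/2), M])₋`. -/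
theorem deformed_square_roots_relation
    (R : Type) [CommRing R] [Algebra ℚ R] (d : R →+ R)
    (hd : Leibniz d) (h : Rˣ) (hdh : d (h : R) = 0)
    (u : R) (Mop : PDO R d)
    (W : PDO R d) (hW1 : W.coeff 1 = (h : R)) (hW2 : ∀ k : ℤ, 1 < k → W.coeff k = 0)
    (hW3 : W * W = PDO.Lop h u)
    (Lt LG : EPDO R d)
    (hLt : Lt = EPDO.lift (PDO.Lop h u)
        - EPDO.eps * EPDO.lift (PDO.pos (PDO.comm (PDO.Lop h u) Mop)))
    (hLG : LG = EPDO.lift (PDO.Lop h u)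
        + EPDO.eps * EPDO.lift (PDO.negp (PDO.comm (PDO.Lop h u) Mop))) :
    (∃! S : EPDO R d, S.re = W ∧ S * S = Lt) ∧
    (∃! S : EPDO R d, S.re = W ∧ S * S = LG) ∧
    (∀ St Sg : EPDO R d, St.re = W → St * St = Lt → Sg.re = W → Sg * Sg = LG →
      Sg = St + EPDO.eps * EPDO.lift (PDO.comm W Mop) ∧
      ∀ n : ℕ,
        Sg ^ (2 * n + 1)
          = St ^ (2 * n + 1) + EPDO.eps * EPDO.lift (PDO.comm (W ^ (2 * n + 1)) Mop) ∧
        EPDO.enegp (Sg ^ (2 * n + 1))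
          = EPDO.enegp (St ^ (2 * n + 1)
              + EPDO.eps * EPDO.lift (PDO.comm (W ^ (2 * n + 1)) Mop))) := by
    classical
  -- abbreviations
  have hLop : W * W = PDO.Lop h u := hW3
  set Lo : PDO R d := PDO.Lop h u with hLo
  set P : PDO R d := PDO.pos (PDO.comm Lo Mop) with hP
  set Q : PDO R d := PDO.negp (PDO.comm Lo Mop) with hQ
  set C : PDO R d := PDO.comm W Mop with hC
  have hLt' : Lt = (⟨Lo, -P⟩ : EPDO R d) := by
    rw [hLt, EPDO.eps_mul_lift]
    apply EPDO.ext'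
    · show Lo - 0 = Lo
      exact sub_zero Lo
    · show (0 : PDO R d) - P = -P
      exact zero_sub P
  have hLG' : LG = (⟨Lo, Q⟩ : EPDO R d) := by
    rw [hLG, EPDO.eps_mul_lift]
    apply EPDO.ext'
    · show Lo + 0 = Lo
      exact add_zero Lo
    · show (0 : PDO R d) + Q = Q
      exact zero_add Q
  -- criterion for being a square root
  have imeq : ∀ (S : EPDO R d) (Z : PDO R d), S.re = W → S * S = (⟨Lo, Z⟩ : EPDO R d) →
      W * S.im + S.im * W = Z := by
    intro S Z hSre hSS
    have h5 : (S * S).im = Z := by rw [hSS]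
    rw [show (S * S).im = S.re * S.im + S.im * S.re from rfl, hSre] at h5
    exact h5
  have sqcrit : ∀ (S : EPDO R d) (Z : PDO R d), S.re = W →
      (W * S.im + S.im * W = Z) → S * S = (⟨Lo, Z⟩ : EPDO R d) := by
    intro S Z hSre him
    apply EPDO.ext'
    · show S.re * S.re = Lo
      rw [hSre, hW3]
    · show S.re * S.im + S.im * S.re = Z
      rw [hSre]
      exact him
  -- solutions of the two Sylvester equations
  obtain ⟨Xt, hXt⟩ := PDO.sylvester_solve W h hW1 hW2 (-P)
  have hCeq : W * C + C * W = PDO.comm (W * W) Mop := PDO.comm_sq hd W Mop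
  have hPQ : -P + PDO.comm Lo Mop = Q := by
    have hpq : P + Q = PDO.comm Lo Mop := PDO.pos_add_negp _
    rw [← hpq]
    abel
  have hXg : W * (Xt + C) + (Xt + C) * W = Q := by
    rw [PDO.mul_add', PDO.add_mul',
      show W * Xt + (W * C) + (Xt * W + C * W)
        = (W * Xt + Xt * W) + (W * C + C * W) from by abel,
      hXt, hCeq, hW3, hPQ]
  -- uniqueness helper
  have uniq : ∀ (Z : PDO R d) (S S' : EPDO R d), S.re = W → S'.re = W →
      (W * S.im + S.im * W = Z) → (W * S'.im + S'.im * W = Z) → S' = S := by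
    intro Z S S' h1 h2 h3 h4
    apply EPDO.ext'
    · rw [h1, h2]
    · exact PDO.sylvester_unique W h hW1 hW2 hd (by rw [h3, h4])
  refine ⟨⟨⟨W, Xt⟩, ⟨rfl, ?_⟩, ?_⟩, ⟨⟨W, Xt + C⟩, ⟨rfl, ?_⟩, ?_⟩, ?_⟩
  · rw [hLt']
    exact sqcrit ⟨W, Xt⟩ (-P) rfl hXt
  · -- uniqueness for Lt
    rintro S' ⟨h1', h2'⟩
    exact uniq (-P) ⟨W, Xt⟩ S' rfl h1'
      (show W * Xt + Xt * W = -P from hXt)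
      (imeq S' (-P) h1' (by rw [← hLt']; exact h2'))
  · rw [hLG']
    exact sqcrit _ _ rfl hXg
  · rintro S' ⟨h1', h2'⟩
    exact uniq Q ⟨W, Xt + C⟩ S' rfl h1'
      (show W * (Xt + C) + (Xt + C) * W = Q from hXg)
      (imeq S' Q h1' (by rw [← hLG']; exact h2'))
  -- main relation part
  intro St Sg h1 h2 h3 h4
  have ht : W * St.im + St.im * W = -P := imeq St (-P) h1 (by rw [← hLt']; exact h2)
  have hg : W * Sg.im + Sg.im * W = Q := imeq Sg Q h3 (by rw [← hLG']; exact h4)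
  have him : Sg.im = St.im + C := by
    apply PDO.sylvester_unique W h hW1 hW2 hd
    rw [hg, PDO.mul_add', PDO.add_mul',
      show W * St.im + W * C + (St.im * W + C * W)
        = (W * St.im + St.im * W) + (W * C + C * W) from by abel,
      ht, hCeq, hW3, hPQ]
  have hrel' : Sg = St + (⟨0, C⟩ : EPDO R d) := by
    apply EPDO.ext'
    · show Sg.re = St.re + 0
      rw [h1, h3, add_zero]
    · show Sg.im = St.im + C
      exact him
  have hrel : Sg = St + EPDO.eps * EPDO.lift C := by
    rw [EPDO.eps_mul_lift]
    exact hrel'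
  refine ⟨hrel, ?_⟩
  have hre : ∀ m : ℕ, (St ^ m).re = W ^ m := by
    intro m
    induction m with
    | zero => rfl
    | succ m ih =>
        show (St ^ m).re * St.re = W ^ m * W
        rw [ih, h1]
  have hpow : ∀ m : ℕ, Sg ^ (m + 1)
      = St ^ (m + 1) + (⟨0, PDO.comm (W ^ (m + 1)) Mop⟩ : EPDO R d) := by
    intro m
    induction m with
    | zero =>
        rw [EPDO.pow_one', EPDO.pow_one', PDO.pow_one', hrel']
    | succ m ih =>
        rw [EPDO.pow_succ' Sg (m + 1), ih]
        apply EPDO.ext'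
        · show ((St ^ (m + 1)).re + 0) * Sg.re
            = (St ^ (m + 1 + 1)).re + (0 : PDO R d)
          rw [add_zero, add_zero, h3]
          show (St ^ (m + 1)).re * W = (St ^ (m + 1)).re * St.re
          rw [h1]
        · show ((St ^ (m + 1)).re + 0) * Sg.im + ((St ^ (m + 1)).im + PDO.comm (W ^ (m + 1)) Mop) * Sg.re
            = ((St ^ (m + 1)).re * St.im + (St ^ (m + 1)).im * St.re)
              + PDO.comm (W ^ (m + 1 + 1)) Mop
          rw [add_zero, him, h3, h1, hre (m + 1), PDO.mul_add', PDO.add_mul']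
          have htel := PDO.telescope hd W Mop (m + 1)
          rw [← htel]
          abel
  intro n
  constructor
  · rw [EPDO.eps_mul_lift]
    exact hpow (2 * n)
  · rw [EPDO.eps_mul_lift, ← hpow (2 * n)]
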